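/- Let S be a graph and T a directed tree, compatible (same vertex set, disjoint edge sets), and suppose for every edge e of S the path of T joining the ends of e is not a directed path of T. Suppose T⁻ is a path, i.e., T is a directed tree whose underlying graph is a path. Then there is a directing of S, forming digraph S′, such that S′ ∪ T and ←S′ ∪ T are both acyclic. -/
import Mathlib


/-- `D` is a directing of the graph `S`. -/
def IsDirecting {V : Type} (S : SimpleGraph V) (D : V → V → Prop) : Prop :=
  (∀ a b, D a b → S.Adj a b) ∧ (∀ a b, S.Adj a b → (D a b ↔ ¬ D b a))

/-- A digraph (given as a relation) is acyclic iff it has no directed cycle,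
equivalently no vertex lies on a closed directed walk of positive length. -/
def Acyc {V : Type} (A : V → V → Prop) : Prop :=
  ∀ v, ¬ Relation.TransGen A v v

namespace Stmt15Aux
def rr (s : ℕ → Bool) (i : ℕ) : ℕ :=
  ((Finset.range i).filter (fun u => 0 < u ∧ s (u-1) ≠ s u)).card
lemma rr_succ (s : ℕ → Bool) (i : ℕ) :
    rr s (i+1) = rr s i + (if 0 < i ∧ s (i-1) ≠ s i then 1 else 0) := by
  unfold rr
  rw [Finset.range_add_one, Finset.filter_insert]
  split
  · rw [Finset.card_insert_of_notMem (by simp)]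
  · simp
lemma rr_mono (s : ℕ → Bool) {i j : ℕ} (h : i ≤ j) : rr s i ≤ rr s j :=
  Finset.card_le_card (Finset.filter_subset_filter _ (Finset.range_subset_range.mpr h))
def pk (s : ℕ → Bool) (n i : ℕ) : Prop := 0 < i ∧ i < n ∧ s (i-1) = true ∧ s i = false
def vl (s : ℕ → Bool) (n i : ℕ) : Prop := 0 < i ∧ i < n ∧ s (i-1) = false ∧ s i = true
instance (s : ℕ → Bool) (n i : ℕ) : Decidable (pk s n i) := by unfold pk; infer_instance
instance (s : ℕ → Bool) (n i : ℕ) : Decidable (vl s n i) := by unfold vl; infer_instance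
noncomputable def ee (s : ℕ → Bool) (n i : ℕ) : ℤ :=
  if pk s n i then (2*(n:ℤ)+1) else if vl s n i then -(2*(n:ℤ)+1) else
    if (if i < n then s i else s (n-1)) = true then (i:ℤ) else -(i:ℤ)
noncomputable def FF (s : ℕ → Bool) (n i : ℕ) : ℤ :=
  (4*(n:ℤ)+3) * ((rr s i : ℤ) + (if pk s n i then 1 else 0) + 1) + ee s n i
noncomputable def GG (s : ℕ → Bool) (n i : ℕ) : ℤ :=
  -(4*(n:ℤ)+3) * ((rr s i : ℤ) + (if vl s n i then 1 else 0) + 1) + ee s n i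
lemma ee_bd (s : ℕ → Bool) (n i : ℕ) (h : i ≤ n) :
    -(2*(n:ℤ)+1) ≤ ee s n i ∧ ee s n i ≤ 2*(n:ℤ)+1 := by
  unfold ee; split_ifs <;> constructor <;> omega
lemma key_lt {n A B e f : ℤ} (hn : 0 ≤ n) (hAB : A < B ∨ (A = B ∧ e < f))
    (he : e ≤ 2*n+1) (hf : -(2*n+1) ≤ f) : (4*n+3) * A + e < (4*n+3) * B + f := by
  rcases hAB with h | ⟨h, h2⟩
  · have h1 : A + 1 ≤ B := h
    have h3 : (4*n+3) * (A+1) ≤ (4*n+3)*B :=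
      mul_le_mul_of_nonneg_left h1 (by linarith)
    have h4 : (4*n+3) * (A+1) = (4*n+3)*A + (4*n+3) := by ring
    linarith
  · subst h; linarith
lemma key_lt' {n A B e f : ℤ} (hn : 0 ≤ n) (hAB : B < A ∨ (A = B ∧ e < f))
    (he : e ≤ 2*n+1) (hf : -(2*n+1) ≤ f) : -(4*n+3) * A + e < -(4*n+3) * B + f := by
  have : (4*n+3) * B + e < (4*n+3) * A + f :=
    key_lt hn (by tauto) he hf
  linarith

-- step lemmas
lemma step_true (s : ℕ → Bool) (n i : ℕ) (hi : i < n) (hsi : s i = true) :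
    FF s n i < FF s n (i+1) ∧ GG s n i < GG s n (i+1) := by
  have hn : (0:ℤ) ≤ n := by positivity
  have hpk_i : ¬ pk s n i := by simp [pk, hsi]
  have hvl_i : vl s n i ↔ (0 < i ∧ s (i-1) = false) := by
    constructor
    · rintro ⟨h1, _, h3, _⟩; exact ⟨h1, h3⟩
    · rintro ⟨h1, h3⟩; exact ⟨h1, hi, h3, hsi⟩
  have hvl_i1 : ¬ vl s n (i+1) := by simp [vl, hsi]
  have hpk_i1 : pk s n (i+1) ↔ (i+1 < n ∧ s (i+1) = false) := by
    constructor
    · rintro ⟨_, h2, _, h4⟩; exact ⟨h2, h4⟩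
    · rintro ⟨h2, h4⟩; exact ⟨Nat.succ_pos i, h2, by simpa using hsi, h4⟩
  have hturn : (0 < i ∧ s (i-1) ≠ s i) ↔ (0 < i ∧ s (i-1) = false) := by
    simp [hsi]
  have hee_i : ee s n i = (if 0 < i ∧ s (i-1) = false then -(2*(n:ℤ)+1) else (i:ℤ)) := by
    unfold ee
    rw [if_neg hpk_i]
    by_cases h : 0 < i ∧ s (i-1) = false
    · rw [if_pos (hvl_i.mpr h), if_pos h]
    · rw [if_neg (fun hv => h (hvl_i.mp hv)), if_neg h, if_pos (by simp [hi, hsi])]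
  have hee_i1 : ee s n (i+1) = (if i+1 < n ∧ s (i+1) = false then (2*(n:ℤ)+1) else ((i:ℤ)+1)) := by
    unfold ee
    by_cases h : i+1 < n ∧ s (i+1) = false
    · rw [if_pos (hpk_i1.mpr h), if_pos h]
    · rw [if_neg (fun hp => h (hpk_i1.mp hp)), if_neg hvl_i1, if_neg h, if_pos]
      · push_cast; ring
      · by_cases h2 : i + 1 < n
        · simp only [if_pos h2]
          rcases Bool.eq_false_or_eq_true (s (i+1)) with hb | hb
          · exact hb
          · exact absurd ⟨h2, hb⟩ h
        · simp only [if_neg h2]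
          have hni : n - 1 = i := by omega
          rw [hni]; exact hsi
  have hrr := rr_succ s i
  constructor
  · -- FF
    unfold FF
    rw [if_neg hpk_i]
    apply key_lt hn _ (by rw [hee_i]; split_ifs <;> omega) (by rw [hee_i1]; split_ifs <;> omega)
    by_cases h1 : 0 < i ∧ s (i-1) = false
    · left
      rw [hrr, if_pos (hturn.mpr h1)]
      push_cast
      split_ifs <;> omega
    · rw [hrr, if_neg (fun ht => h1 (hturn.mp ht))]
      by_cases h2 : pk s n (i+1)
      · left; rw [if_pos h2]; push_cast; omega
      · right
        rw [if_neg h2]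
        refine ⟨by push_cast; ring, ?_⟩
        rw [hee_i, hee_i1, if_neg h1, if_neg (fun hh => h2 (hpk_i1.mpr hh))]
        omega
  · -- GG
    unfold GG
    rw [if_neg hvl_i1]
    apply key_lt' hn _ (by rw [hee_i]; split_ifs <;> omega) (by rw [hee_i1]; split_ifs <;> omega)
    right
    constructor
    · rw [hrr]
      by_cases h1 : 0 < i ∧ s (i-1) = false
      · rw [if_pos (hturn.mpr h1), if_pos (hvl_i.mpr h1)]; push_cast; ring
      · rw [if_neg (fun ht => h1 (hturn.mp ht)), if_neg (fun hv => h1 (hvl_i.mp hv))]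
        push_cast; ring
    · rw [hee_i, hee_i1]
      split_ifs <;> omega

lemma step_false (s : ℕ → Bool) (n i : ℕ) (hi : i < n) (hsi : s i = false) :
    FF s n (i+1) < FF s n i ∧ GG s n (i+1) < GG s n i := by
  have hn : (0:ℤ) ≤ n := by positivity
  have hvl_i : ¬ vl s n i := by simp [vl, hsi]
  have hpk_i : pk s n i ↔ (0 < i ∧ s (i-1) = true) := by
    constructor
    · rintro ⟨h1, _, h3, _⟩; exact ⟨h1, h3⟩
    · rintro ⟨h1, h3⟩; exact ⟨h1, hi, h3, hsi⟩
  have hpk_i1 : ¬ pk s n (i+1) := by simp [pk, hsi]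
  have hvl_i1 : vl s n (i+1) ↔ (i+1 < n ∧ s (i+1) = true) := by
    constructor
    · rintro ⟨_, h2, _, h4⟩; exact ⟨h2, h4⟩
    · rintro ⟨h2, h4⟩; exact ⟨Nat.succ_pos i, h2, by simpa using hsi, h4⟩
  have hturn : (0 < i ∧ s (i-1) ≠ s i) ↔ (0 < i ∧ s (i-1) = true) := by
    simp [hsi]
  have hee_i : ee s n i = (if 0 < i ∧ s (i-1) = true then (2*(n:ℤ)+1) else -(i:ℤ)) := by
    unfold ee
    by_cases h : 0 < i ∧ s (i-1) = true
    · rw [if_pos (hpk_i.mpr h), if_pos h]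
    · rw [if_neg (fun hp => h (hpk_i.mp hp)), if_neg hvl_i, if_neg h, if_neg (by simp [hi, hsi])]
  have hee_i1 : ee s n (i+1) = (if i+1 < n ∧ s (i+1) = true then -(2*(n:ℤ)+1) else -((i:ℤ)+1)) := by
    unfold ee
    rw [if_neg hpk_i1]
    by_cases h : i+1 < n ∧ s (i+1) = true
    · rw [if_pos (hvl_i1.mpr h), if_pos h]
    · rw [if_neg (fun hv => h (hvl_i1.mp hv)), if_neg h, if_neg]
      · push_cast; ring_nf
      · by_cases h2 : i + 1 < n
        · simp only [if_pos h2]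
          rcases Bool.eq_false_or_eq_true (s (i+1)) with hb | hb
          · exact absurd ⟨h2, hb⟩ h
          · simp [hb]
        · simp only [if_neg h2]
          have hni : n - 1 = i := by omega
          rw [hni, hsi]; simp
  have hrr := rr_succ s i
  constructor
  · -- FF : FF (i+1) < FF i
    unfold FF
    rw [if_neg hpk_i1]
    apply key_lt hn _ (by rw [hee_i1]; split_ifs <;> omega) (by rw [hee_i]; split_ifs <;> omega)
    right
    constructor
    · rw [hrr]
      by_cases h1 : 0 < i ∧ s (i-1) = true
      · rw [if_pos (hturn.mpr h1), if_pos (hpk_i.mpr h1)]; push_cast; ring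
      · rw [if_neg (fun ht => h1 (hturn.mp ht)), if_neg (fun hp => h1 (hpk_i.mp hp))]
        push_cast; ring
    · rw [hee_i, hee_i1]
      split_ifs <;> omega
  · -- GG : GG (i+1) < GG i
    unfold GG
    rw [if_neg hvl_i]
    apply key_lt' hn _ (by rw [hee_i1]; split_ifs <;> omega) (by rw [hee_i]; split_ifs <;> omega)
    by_cases h1 : 0 < i ∧ s (i-1) = true
    · left
      rw [hrr, if_pos (hturn.mpr h1)]
      push_cast
      split_ifs <;> omega
    · rw [hrr, if_neg (fun ht => h1 (hturn.mp ht))]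
      by_cases h2 : vl s n (i+1)
      · left; rw [if_pos h2]; push_cast; omega
      · right
        refine ⟨by rw [if_neg h2]; push_cast; ring, ?_⟩
        rw [hee_i, hee_i1, if_neg h1, if_neg (fun hh => h2 (hvl_i1.mpr hh))]
        omega

lemma far_apart (s : ℕ → Bool) (n i j : ℕ) (hij : i < j) (hj : j ≤ n)
    (u : ℕ) (hu1 : i < u) (hu2 : u < j) (hu3 : s (u-1) ≠ s u) :
    FF s n i < FF s n j ∧ GG s n j < GG s n i := by
  have hn : (0:ℤ) ≤ n := by positivity
  have hrseq := rr_succ s i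
  have hru := rr_succ s u
  rw [if_pos ⟨by omega, hu3⟩] at hru
  have h1 : rr s (i+1) ≤ rr s u := rr_mono s hu1
  have h2 : rr s (u+1) ≤ rr s j := rr_mono s hu2
  have hbig : rr s i + (if 0 < i ∧ s (i-1) ≠ s i then 1 else 0) + 1 ≤ rr s j := by
    split_ifs at hrseq ⊢ <;> omega
  have hbi := ee_bd s n i (by omega)
  have hbj := ee_bd s n j hj
  constructor
  · unfold FF
    apply key_lt hn _ hbi.2 hbj.1
    left
    have hpki : (if pk s n i then (1:ℤ) else 0) ≤ (if 0 < i ∧ s (i-1) ≠ s i then (1:ℤ) else 0) := by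
      split_ifs with hp ht
      · omega
      · exact absurd ⟨hp.1, by rw [hp.2.2.1, hp.2.2.2]; simp⟩ ht
      · omega
      · omega
    have hpkj : (0:ℤ) ≤ (if pk s n j then (1:ℤ) else 0) := by split_ifs <;> omega
    have : ((rr s i : ℤ)) + (if 0 < i ∧ s (i-1) ≠ s i then (1:ℤ) else 0) + 1 ≤ (rr s j : ℤ) := by
      split_ifs at hbig ⊢ <;> omega
    linarith
  · unfold GG
    apply key_lt' hn _ hbj.2 hbi.1
    left
    have hvli : (if vl s n i then (1:ℤ) else 0) ≤ (if 0 < i ∧ s (i-1) ≠ s i then (1:ℤ) else 0) := by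
      split_ifs with hp ht
      · omega
      · exact absurd ⟨hp.1, by rw [hp.2.2.1, hp.2.2.2]; simp⟩ ht
      · omega
      · omega
    have hvlj : (0:ℤ) ≤ (if vl s n j then (1:ℤ) else 0) := by split_ifs <;> omega
    have : ((rr s i : ℤ)) + (if 0 < i ∧ s (i-1) ≠ s i then (1:ℤ) else 0) + 1 ≤ (rr s j : ℤ) := by
      split_ifs at hbig ⊢ <;> omega
    linarith

lemma transgen_lt {α : Type} (R : α → α → Prop) (φ : α → ℤ)
    (h : ∀ x y, R x y → φ x < φ y) :
    ∀ a b, Relation.TransGen R a b → φ a < φ b := by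
  intro a b hab
  induction hab with
  | single h2 => exact h _ _ h2
  | tail _ h2 ih => exact lt_trans ih (h _ _ h2)

end Stmt15Aux

/-- let `S` be a graph and `T` a compatible directed tree whose
underlying graph is a (Hamiltonian) path, such that for every edge of `S` the
path of `T` joining its ends is not a directed path of `T` (equivalently neither
end reaches the other in `T`).  Then `S` has a directing `S'` with `S' ∪ T` and
`←S' ∪ T` both acyclic. -/

theorem stmt15 {V : Type} [Fintype V] (S : SimpleGraph V) (T : V → V → Prop)
    (hirr : ∀ a, ¬ T a a) (hasym : ∀ a b, T a b → ¬ T b a)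
    (hcompat : ∀ a b, T a b → ¬ S.Adj a b)
    -- the underlying graph of T is a path through all the vertices:
    (n : ℕ) (p : Fin (n + 1) → V) (hbij : Function.Bijective p)
    (hpathT : ∀ a b, (SimpleGraph.fromRel T).Adj a b ↔
      ∃ i : Fin n, (a = p i.castSucc ∧ b = p i.succ) ∨ (b = p i.castSucc ∧ a = p i.succ))
    -- no S-edge has its ends joined by a directed path of T:
    (hS : ∀ a b, S.Adj a b → ¬ Relation.TransGen T a b) :
    ∃ D : V → V → Prop, IsDirecting S D ∧
      Acyc (fun a b => D a b ∨ T a b) ∧ Acyc (fun a b => D b a ∨ T a b) := by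
  classical
  obtain ⟨e, he⟩ : ∃ e : Fin (n+1) ≃ V, ∀ x, e x = p x :=
    ⟨Equiv.ofBijective p hbij, fun x => rfl⟩
  set P : ℕ → V := fun i => p ⟨i % (n+1), Nat.mod_lt _ (Nat.succ_pos n)⟩ with hPdef
  set q : V → ℕ := fun v => ((e.symm v : Fin (n+1)) : ℕ) with hqdef
  set s : ℕ → Bool := fun t => decide (T (P t) (P (t+1))) with hsdef
  have hPfin : ∀ (x : Fin (n+1)), P x = p x := by
    intro x
    simp only [hPdef]
    congr 1
    exact Fin.ext (by simp [Nat.mod_eq_of_lt x.isLt])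
  have hqP : ∀ t, t ≤ n → q (P t) = t := by
    intro t ht
    have h1 : P t = p ⟨t, by omega⟩ := by
      simp only [hPdef]; congr 1; exact Fin.ext (by simp [Nat.mod_eq_of_lt (by omega : t < n+1)])
    rw [h1, hqdef]
    simp only [← he]
    rw [e.symm_apply_apply]
  have hqle : ∀ v, q v ≤ n := by
    intro v; exact Nat.lt_succ_iff.mp (e.symm v).isLt
  have hPq : ∀ v, P (q v) = v := by
    intro v
    have : P (q v) = p (e.symm v) := by
      simp only [hPdef, hqdef]
      congr 1
      exact Fin.ext (by simp [Nat.mod_eq_of_lt (e.symm v).isLt])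
    rw [this, ← he, e.apply_symm_apply]
  have hqinj : ∀ a b : V, q a = q b → a = b := by
    intro a b hab
    have := congrArg P hab
    rwa [hPq, hPq] at this
  have hcast : ∀ (i : Fin n), p i.castSucc = P i.1 ∧ p i.succ = P (i.1+1) := by
    intro i
    constructor
    · rw [show (i.castSucc : Fin (n+1)) = (⟨i.1, by omega⟩ : Fin (n+1)) from Fin.ext rfl, ← hPfin]
    · rw [show (i.succ : Fin (n+1)) = (⟨i.1+1, by omega⟩ : Fin (n+1)) from Fin.ext rfl, ← hPfin]
  have hedge : ∀ t, t < n → T (P t) (P (t+1)) ∨ T (P (t+1)) (P t) := by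
    intro t ht
    have h1 := hcast ⟨t, ht⟩
    have hadj : (SimpleGraph.fromRel T).Adj (P t) (P (t+1)) :=
      (hpathT _ _).2 ⟨⟨t, ht⟩, Or.inl ⟨h1.1.symm, h1.2.symm⟩⟩
    rw [SimpleGraph.fromRel_adj] at hadj
    exact hadj.2
  have hStrue : ∀ t, s t = true ↔ T (P t) (P (t+1)) := by
    intro t; simp [hsdef]
  have hSfalse : ∀ t, t < n → (s t = false ↔ T (P (t+1)) (P t)) := by
    intro t ht
    constructor
    · intro hf
      rcases hedge t ht with h | h
      · rw [← hStrue t] at h; rw [hf] at h; exact absurd h (by simp)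
      · exact h
    · intro hT
      rcases Bool.eq_false_or_eq_true (s t) with hb | hb
      · exact absurd ((hStrue t).1 hb) (hasym _ _ hT)
      · exact hb
  have hTchar : ∀ a b, T a b → ∃ t, t < n ∧
      ((a = P t ∧ b = P (t+1) ∧ s t = true) ∨ (b = P t ∧ a = P (t+1) ∧ s t = false)) := by
    intro a b hT
    have hab : a ≠ b := fun h => hirr a (by rw [h] at hT ⊢; exact hT)
    have hadj : (SimpleGraph.fromRel T).Adj a b := by
      rw [SimpleGraph.fromRel_adj]; exact ⟨hab, Or.inl hT⟩
    obtain ⟨i, hi⟩ := (hpathT a b).1 hadj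
    have hc := hcast i
    rcases hi with ⟨ha, hb⟩ | ⟨hb, ha⟩
    · refine ⟨i.1, i.isLt, Or.inl ⟨by rw [ha, hc.1], by rw [hb, hc.2], ?_⟩⟩
      rw [hStrue]
      rw [ha, hc.1] at hT; rw [hb, hc.2] at hT; exact hT
    · refine ⟨i.1, i.isLt, Or.inr ⟨by rw [hb, hc.1], by rw [ha, hc.2], ?_⟩⟩
      rw [hSfalse i.1 i.isLt]
      rw [hb, hc.1] at hT; rw [ha, hc.2] at hT; exact hT
  -- chains
  have hchainT : ∀ i j, i < j → j ≤ n → (∀ t, i ≤ t → t < j → s t = true) →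
      Relation.TransGen T (P i) (P j) := by
    intro i j hij
    induction j, hij using Nat.le_induction with
    | base =>
      intro hn hall
      exact Relation.TransGen.single ((hStrue i).1 (hall i le_rfl (by omega)))
    | succ j hj ih =>
      intro hn hall
      exact Relation.TransGen.tail
        (ih (by omega) (fun t h1 h2 => hall t h1 (by omega)))
        ((hStrue j).1 (hall j (by omega) (by omega)))
  have hchainF : ∀ i j, i < j → j ≤ n → (∀ t, i ≤ t → t < j → s t = false) →
      Relation.TransGen T (P j) (P i) := by
    intro i j hij
    induction j, hij using Nat.le_induction with
    | base =>
      intro hn hall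
      exact Relation.TransGen.single ((hSfalse i (by omega)).1 (hall i le_rfl (by omega)))
    | succ j hj ih =>
      intro hn hall
      exact Relation.TransGen.head
        ((hSfalse j (by omega)).1 (hall j (by omega) (by omega)))
        (ih (by omega) (fun t h1 h2 => hall t h1 (by omega)))
  have hconst : ∀ i j, (∀ u, i < u → u < j → s (u-1) = s u) →
      ∀ t, i ≤ t → t < j → s t = s i := by
    intro i j hno t
    induction t with
    | zero => intro h1 _; have : i = 0 := Nat.le_zero.mp h1; rw [this]
    | succ t ih =>
      intro h1 h2
      rcases Nat.eq_or_lt_of_le h1 with h | h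
      · rw [← h]
      · have ht : i ≤ t := by omega
        rw [← hno (t+1) (by omega) h2]
        simpa using ih ht (by omega)
  -- main comparison for S-edges
  have hM : ∀ a b, S.Adj a b → q a < q b →
      Stmt15Aux.FF s n (q a) < Stmt15Aux.FF s n (q b) ∧
      Stmt15Aux.GG s n (q b) < Stmt15Aux.GG s n (q a) := by
    intro a b hab hlt
    by_cases hbr : ∃ u, q a < u ∧ u < q b ∧ s (u-1) ≠ s u
    · obtain ⟨u, hu1, hu2, hu3⟩ := hbr
      exact Stmt15Aux.far_apart s n (q a) (q b) hlt (hqle b) u hu1 hu2 hu3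
    · push_neg at hbr
      have hcst := hconst (q a) (q b) hbr
      rcases Bool.eq_false_or_eq_true (s (q a)) with hsa | hsa
      · have hch : Relation.TransGen T (P (q a)) (P (q b)) :=
          hchainT (q a) (q b) hlt (hqle b) (fun t h1 h2 => (hcst t h1 h2).trans hsa)
        rw [hPq, hPq] at hch
        exact absurd hch (hS a b hab)
      · have hch : Relation.TransGen T (P (q b)) (P (q a)) :=
          hchainF (q a) (q b) hlt (hqle b) (fun t h1 h2 => (hcst t h1 h2).trans hsa)
        rw [hPq, hPq] at hch
        exact absurd hch (hS b a hab.symm)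
  -- the T-edge monotonicity, in terms of vertices
  have hTF : ∀ a b, T a b → Stmt15Aux.FF s n (q a) < Stmt15Aux.FF s n (q b) ∧
      Stmt15Aux.GG s n (q a) < Stmt15Aux.GG s n (q b) := by
    intro a b hT
    obtain ⟨t, ht, hcase⟩ := hTchar a b hT
    rcases hcase with ⟨ha, hb, hst⟩ | ⟨hb, ha, hst⟩
    · rw [ha, hb, hqP t (by omega), hqP (t+1) (by omega)]
      exact Stmt15Aux.step_true s n t ht hst
    · rw [ha, hb, hqP t (by omega), hqP (t+1) (by omega)]
      exact Stmt15Aux.step_false s n t ht hst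
  -- define the directing
  refine ⟨fun a b => S.Adj a b ∧ Stmt15Aux.FF s n (q a) < Stmt15Aux.FF s n (q b),
    ⟨fun a b h => h.1, ?_⟩, ?_, ?_⟩
  · intro a b hab
    have hne : q a ≠ q b := fun h => hab.ne (hqinj a b h)
    constructor
    · rintro ⟨_, hf⟩ ⟨_, hf'⟩
      exact absurd hf' (not_lt_of_gt hf)
    · intro hnot
      refine ⟨hab, ?_⟩
      rcases Nat.lt_or_ge (q a) (q b) with h | h
      · exact (hM a b hab h).1
      · have h2 : q b < q a := by omega
        exact absurd ⟨hab.symm, (hM b a hab.symm h2).1⟩ hnot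
  · -- Acyc (D ∪ T)
    intro v hv
    have key : ∀ x y, ((S.Adj x y ∧ Stmt15Aux.FF s n (q x) < Stmt15Aux.FF s n (q y)) ∨ T x y) →
        Stmt15Aux.FF s n (q x) < Stmt15Aux.FF s n (q y) := by
      rintro x y (⟨_, h⟩ | h)
      · exact h
      · exact (hTF x y h).1
    exact absurd (Stmt15Aux.transgen_lt _ (fun x => Stmt15Aux.FF s n (q x)) key v v hv)
      (lt_irrefl _)
  · -- Acyc (←D ∪ T)
    intro v hv
    have key : ∀ x y, ((S.Adj y x ∧ Stmt15Aux.FF s n (q y) < Stmt15Aux.FF s n (q x)) ∨ T x y) →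
        Stmt15Aux.GG s n (q x) < Stmt15Aux.GG s n (q y) := by
      rintro x y (⟨hadj, h⟩ | h)
      · rcases Nat.lt_or_ge (q y) (q x) with h2 | h2
        · exact (hM y x hadj h2).2
        · have hne : q y ≠ q x := fun hh => hadj.ne (hqinj y x hh)
          have h3 : q x < q y := by omega
          exact absurd (hM x y hadj.symm h3).1 (not_lt_of_gt h)
      · exact (hTF x y h).2
    exact absurd (Stmt15Aux.transgen_lt _ (fun x => Stmt15Aux.GG s n (q x)) key v v hv)
      (lt_irrefl _)
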